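/- Let d ≥ 1. There exists a number m(d) ≥ 2 such that N = N_{m(d)} · N_ℤ; that is, every element of N can be written as a product of an element of N all of whose entries have absolute value at most m(d) with an integer matrix belonging to N. -/
import Mathlib


/- Statement 11: there exists m(d) ≥ 2 such that N = N_{m(d)} · N_ℤ, where N is the
   unipotent upper-triangular symplectic group, N_u its subset of matrices with entries
   bounded by u, and N_ℤ = GL(2d,ℤ) ∩ N its integer points. -/

open Matrix

abbrev Mat (d : ℕ) := Matrix (Fin d ⊕ Fin d) (Fin d ⊕ Fin d) ℝ

/-- The special orthogonal symplectic group `K = SO(2d) ∩ Sp(2d,ℝ)`. -/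
noncomputable def Kset (d : ℕ) : Set (Mat d) :=
  {k | k ∈ Matrix.symplecticGroup (Fin d) ℝ ∧ kᵀ * k = 1 ∧ k.det = 1}

/-- The diagonal symplectic matrix `diag(v_1, …, v_d, v_1⁻¹, …, v_d⁻¹)`. -/
noncomputable def aDiag {d : ℕ} (v : Fin d → ℝ) : Mat d :=
  Matrix.fromBlocks (Matrix.diagonal v) 0 0 (Matrix.diagonal fun i => (v i)⁻¹)

/-- The Siegel-type set `A_t` of positive diagonal symplectic matrices with
`a_i ≤ t a_{i+1}` and `a_d ≤ t`. -/
noncomputable def Atset (d : ℕ) (t : ℝ) : Set (Mat d) :=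
  {a | ∃ v : Fin d → ℝ, (∀ i, 0 < v i) ∧
    (∀ i : Fin d, ∀ h : i.val + 1 < d, v i ≤ t * v ⟨i.val + 1, h⟩) ∧
    (∀ h : 0 < d, v ⟨d - 1, by omega⟩ ≤ t) ∧ a = aDiag v}

/-- The unipotent upper-triangular symplectic group
`N = {[[N, M],[0, N⁻ᵀ]] : N unipotent upper triangular, N Mᵀ = M Nᵀ}`. -/
noncomputable def Nset (d : ℕ) : Set (Mat d) :=
  {n | ∃ N M : Matrix (Fin d) (Fin d) ℝ,
    (∀ i, N i i = 1) ∧ (∀ i j : Fin d, j < i → N i j = 0) ∧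
    N * Mᵀ = M * Nᵀ ∧ n = Matrix.fromBlocks N M 0 (N⁻¹)ᵀ}

/-- The subset `N_u ⊂ N` of matrices all of whose entries are bounded by `u`. -/
noncomputable def Nuset (d : ℕ) (u : ℝ) : Set (Mat d) :=
  {n | n ∈ Nset d ∧ ∀ i j, |n i j| ≤ u}

/-- The subring of real numbers that are integers. -/
noncomputable def intMat : Subring ℝ := (Int.castRingHom ℝ).range

section AuxReduction

open Finset

variable {d : ℕ} {R : Type*} [CommRing R]

/-- Unipotent upper triangular matrices. -/
def MyUnip (A : Matrix (Fin d) (Fin d) R) : Prop :=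
  (∀ i, A i i = 1) ∧ ∀ i j : Fin d, j < i → A i j = 0

theorem MyUnip.bt {A : Matrix (Fin d) (Fin d) R} (h : MyUnip A) :
    A.BlockTriangular id := fun i j hij => h.2 i j hij

theorem MyUnip.det {A : Matrix (Fin d) (Fin d) R} (h : MyUnip A) : A.det = 1 := by
  rw [Matrix.det_of_upperTriangular h.bt]
  simp [h.1]

theorem MyUnip.mul {A B : Matrix (Fin d) (Fin d) R} (hA : MyUnip A) (hB : MyUnip B) :
    MyUnip (A * B) := by
  constructor
  · intro i
    rw [Matrix.mul_apply]
    rw [Finset.sum_eq_single i]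
    · rw [hA.1, hB.1, one_mul]
    · intro k _ hk
      rcases lt_or_gt_of_ne hk with h | h
      · rw [hA.2 i k h, zero_mul]
      · rw [hB.2 k i h, mul_zero]
    · simp
  · exact fun i j hij => (hA.bt.mul hB.bt) hij

noncomputable def MyUnip.invertible {A : Matrix (Fin d) (Fin d) R} (h : MyUnip A) :
    Invertible A :=
  A.invertibleOfIsUnitDet (by rw [h.det]; exact isUnit_one)

theorem MyUnip.inv {A : Matrix (Fin d) (Fin d) R} (h : MyUnip A) : MyUnip A⁻¹ := by
  haveI := h.invertible
  have hbt : A⁻¹.BlockTriangular id := blockTriangular_inv_of_blockTriangular h.bt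
  refine ⟨fun i => ?_, fun i j hij => hbt hij⟩
  have h1 : (A * A⁻¹) i i = 1 := by rw [Matrix.mul_inv_of_invertible]; simp
  rw [Matrix.mul_apply, Finset.sum_eq_single i] at h1
  · rwa [h.1, one_mul] at h1
  · intro k _ hk
    rcases lt_or_gt_of_ne hk with hlt | hgt
    · rw [h.2 i k hlt, zero_mul]
    · rw [hbt hgt, mul_zero]
  · simp

/-- Integer reduction matrix entries, defined by downward recursion on the gap `j - i`. -/
noncomputable def Pent (A : Matrix (Fin d) (Fin d) ℝ) (i j : Fin d) : ℤ :=
  if h : i < j then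
    -round (A i j + ∑ k ∈ (Finset.Ioo i j).attach, A i k.1 * (Pent A k.1 j : ℝ))
  else if i = j then 1 else 0
termination_by (j : ℕ) - (i : ℕ)
decreasing_by
  have hk := Finset.mem_Ioo.mp k.2
  have h1 : (i : ℕ) < (k.1 : ℕ) := hk.1
  have h2 : (k.1 : ℕ) < (j : ℕ) := hk.2
  omega

theorem Pent_diag (A : Matrix (Fin d) (Fin d) ℝ) (i : Fin d) : Pent A i i = 1 := by
  rw [Pent.eq_def]; simp

theorem Pent_lower (A : Matrix (Fin d) (Fin d) ℝ) {i j : Fin d} (h : j < i) :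
    Pent A i j = 0 := by
  rw [Pent.eq_def]; rw [dif_neg (by omega), if_neg (by omega)]

theorem Pent_upper (A : Matrix (Fin d) (Fin d) ℝ) {i j : Fin d} (h : i < j) :
    Pent A i j =
      -round (A i j + ∑ k ∈ (Finset.Ioo i j).attach, A i k.1 * (Pent A k.1 j : ℝ)) := by
  rw [Pent.eq_def]; rw [dif_pos h]

/-- `Pent` as a matrix. -/
noncomputable def Pmat (A : Matrix (Fin d) (Fin d) ℝ) : Matrix (Fin d) (Fin d) ℤ :=
  Matrix.of fun i j => Pent A i j

@[simp] theorem Pmat_apply (A : Matrix (Fin d) (Fin d) ℝ) (i j : Fin d) :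
    Pmat A i j = Pent A i j := rfl

theorem Pmat_unip (A : Matrix (Fin d) (Fin d) ℝ) :
    MyUnip ((Pmat A).map (Int.cast : ℤ → ℝ)) := by
  refine ⟨fun i => ?_, fun i j h => ?_⟩
  · simp [Matrix.map_apply, Pent_diag]
  · simp [Matrix.map_apply, Pent_lower A h]

theorem reduce_unip {A : Matrix (Fin d) (Fin d) ℝ} (hA : MyUnip A) :
    MyUnip (A * (Pmat A).map (Int.cast : ℤ → ℝ)) ∧
      ∀ i j, |(A * (Pmat A).map (Int.cast : ℤ → ℝ)) i j| ≤ 1 := by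
  have hP : MyUnip ((Pmat A).map (Int.cast : ℤ → ℝ)) := Pmat_unip A
  have hU := hA.mul hP
  refine ⟨hU, fun i j => ?_⟩
  rcases lt_trichotomy i j with h | h | h
  · have key : (A * (Pmat A).map (Int.cast : ℤ → ℝ)) i j =
        (A i j + ∑ k ∈ (Finset.Ioo i j).attach, A i k.1 * (Pent A k.1 j : ℝ))
          + (Pent A i j : ℝ) := by
      rw [Matrix.mul_apply]
      have hsub : ∑ k : Fin d, A i k * ((Pmat A).map (Int.cast : ℤ → ℝ)) k j
          = ∑ k ∈ Finset.Icc i j, A i k * ((Pmat A).map (Int.cast : ℤ → ℝ)) k j := by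
        refine (Finset.sum_subset (Finset.subset_univ _) fun k _ hk => ?_).symm
        rw [Finset.mem_Icc, not_and_or] at hk
        rcases hk with hk | hk
        · rw [hA.2 i k (by omega), zero_mul]
        · have : j < k := by omega
          simp [Matrix.map_apply, Pent_lower A this]
      rw [hsub]
      have hi : i ∈ Finset.Icc i j := by simp [h.le]
      rw [← Finset.add_sum_erase _ _ hi, Finset.Icc_erase_left]
      have hj : j ∈ Finset.Ioc i j := by simp [h]
      rw [← Finset.add_sum_erase _ _ hj, Finset.Ioc_erase_right]
      rw [← Finset.sum_attach (Finset.Ioo i j)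
        (fun k => A i k * ((Pmat A).map (Int.cast : ℤ → ℝ)) k j)]
      simp only [Matrix.map_apply, Pmat_apply, Pent_diag, Int.cast_one, mul_one, hA.1 i, one_mul]
      ring
    rw [key, Pent_upper A h]
    push_cast
    rw [← sub_eq_add_neg]
    calc |_ - (round _ : ℝ)| ≤ 1/2 := abs_sub_round _
    _ ≤ 1 := by norm_num
  · subst h
    rw [hU.1 i]
    norm_num
  · rw [hU.2 i j h]
    norm_num

theorem abs_det_le_factorial {M : Matrix (Fin d) (Fin d) ℝ} (h : ∀ i j, |M i j| ≤ 1) :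
    |M.det| ≤ (Nat.factorial d : ℝ) := by
  rw [Matrix.det_apply]
  calc |∑ σ : Equiv.Perm (Fin d), Equiv.Perm.sign σ • ∏ i, M (σ i) i|
      ≤ ∑ σ : Equiv.Perm (Fin d), |Equiv.Perm.sign σ • ∏ i, M (σ i) i| :=
        Finset.abs_sum_le_sum_abs _ _
    _ ≤ ∑ _σ : Equiv.Perm (Fin d), 1 := by
        refine Finset.sum_le_sum fun σ _ => ?_
        have h1 : |∏ i, M (σ i) i| ≤ 1 := by
          rw [Finset.abs_prod]
          exact Finset.prod_le_one (fun i _ => abs_nonneg _) fun i _ => h _ _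
        rcases Int.units_eq_one_or (Equiv.Perm.sign σ) with hs | hs <;> rw [hs] <;>
          simpa using h1
    _ = (Nat.factorial d : ℝ) := by
        simp [Finset.card_univ, Fintype.card_perm]

theorem abs_adjugate_le_factorial {B : Matrix (Fin d) (Fin d) ℝ} (h : ∀ i j, |B i j| ≤ 1)
    (i j : Fin d) : |B.adjugate i j| ≤ (Nat.factorial d : ℝ) := by
  rw [Matrix.adjugate_apply]
  refine abs_det_le_factorial fun k l => ?_
  rw [Matrix.updateRow_apply]
  split
  · rcases eq_or_ne l i with rfl | hl <;> simp [Pi.single_apply, *]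
  · exact h k l

end AuxReduction

/-- **Reduction theory for the unipotent group `N`:** there is `m = m(d) ≥ 2` such that
every element of `N` is a product of an element of `N_{m}` and an integer element of
`N`. -/
theorem N_eq_Nbounded_mul_NZ (d : ℕ) (hd : 1 ≤ d) :
    ∃ m : ℝ, 2 ≤ m ∧
      ∀ n ∈ Nset d, ∃ n₁ ∈ Nuset d m, ∃ n₂ ∈ Nset d,
        (∀ i j, n₂ i j ∈ intMat) ∧ n = n₁ * n₂ := by
  have hfac1 : (1 : ℝ) ≤ (Nat.factorial d : ℝ) := by
    exact_mod_cast Nat.one_le_iff_ne_zero.mpr (Nat.factorial_ne_zero d)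
  have hdfac : (d : ℝ) ≤ (Nat.factorial d : ℝ) := by exact_mod_cast Nat.self_le_factorial d
  refine ⟨(Nat.factorial d : ℝ) + 2, by linarith, fun n hn => ?_⟩
  obtain ⟨N, M, hdiag, hlow, hsymm, rfl⟩ := hn
  have hNu : MyUnip N := ⟨hdiag, hlow⟩
  have hred := reduce_unip hNu
  obtain ⟨Pr, hPrdef⟩ : ∃ Pr, Pr = (Pmat N).map (Int.cast : ℤ → ℝ) := ⟨_, rfl⟩
  obtain ⟨B, hBdef⟩ : ∃ B, B = N * Pr := ⟨_, rfl⟩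
  rw [← hPrdef, ← hBdef] at hred
  obtain ⟨hBu, hBle⟩ := hred
  have hPu : MyUnip Pr := hPrdef ▸ Pmat_unip N
  have hPdet : IsUnit Pr.det := by rw [hPu.det]; exact isUnit_one
  have hBdet : IsUnit B.det := by rw [hBu.det]; exact isUnit_one
  have hBTdet : IsUnit Bᵀ.det := by rw [Matrix.det_transpose]; exact hBdet
  obtain ⟨Qr, hQrdef⟩ : ∃ Qr, Qr = Pr⁻¹ := ⟨_, rfl⟩
  have hQu : MyUnip Qr := hQrdef ▸ hPu.inv
  have hNB : N = B * Qr := by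
    rw [hQrdef, hBdef, Matrix.mul_nonsing_inv_cancel_right _ _ hPdet]
  have hPQ : Pr * Qr = 1 := by rw [hQrdef]; exact Matrix.mul_nonsing_inv _ hPdet
  have hQP : Qr * Pr = 1 := by rw [hQrdef]; exact Matrix.nonsing_inv_mul _ hPdet
  have hQinv : Qr⁻¹ = Pr := by rw [hQrdef]; exact Matrix.nonsing_inv_nonsing_inv _ hPdet
  have hBinv_le : ∀ i j, |B⁻¹ i j| ≤ (Nat.factorial d : ℝ) := by
    intro i j
    have hadj : B⁻¹ = B.adjugate := by
      rw [Matrix.inv_def, hBu.det]; simp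
    rw [hadj]
    exact abs_adjugate_le_factorial hBle i j
  obtain ⟨S, hSdef⟩ : ∃ S, S = B⁻¹ * (M * Qrᵀ) := ⟨_, rfl⟩
  have hSsym : Sᵀ = S := by
    have e1 : S = B⁻¹ * (M * Nᵀ) * Bᵀ⁻¹ := by
      rw [hSdef]
      calc B⁻¹ * (M * Qrᵀ) = B⁻¹ * (M * Qrᵀ) * (Bᵀ * Bᵀ⁻¹) := by
            rw [Matrix.mul_nonsing_inv _ hBTdet, mul_one]
        _ = B⁻¹ * (M * (Qrᵀ * Bᵀ)) * Bᵀ⁻¹ := by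
            simp only [Matrix.mul_assoc]
        _ = B⁻¹ * (M * Nᵀ) * Bᵀ⁻¹ := by
            rw [← Matrix.transpose_mul, ← hNB]
    have e2 : Sᵀ = B⁻¹ * (N * Mᵀ) * Bᵀ⁻¹ := by
      have hQrN : Qr = B⁻¹ * N := by
        rw [hNB, Matrix.nonsing_inv_mul_cancel_left _ _ hBdet]
      rw [hSdef, Matrix.transpose_mul, Matrix.transpose_mul, Matrix.transpose_transpose,
        Matrix.transpose_nonsing_inv, hQrN]
      simp only [Matrix.mul_assoc]
    rw [e2, e1, hsymm]
  obtain ⟨T, hTdef⟩ : ∃ T : Matrix (Fin d) (Fin d) ℤ,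
      T = Matrix.of fun i j => round (S i j) := ⟨_, rfl⟩
  obtain ⟨Tr, hTrdef⟩ : ∃ Tr, Tr = T.map (Int.cast : ℤ → ℝ) := ⟨_, rfl⟩
  have hTsym : Trᵀ = Tr := by
    ext i j
    have h2 : S j i = S i j := congrFun (congrFun hSsym i) j
    simp [hTrdef, hTdef, Matrix.transpose_apply, Matrix.map_apply, h2]
  obtain ⟨Rm, hRmdef⟩ : ∃ Rm, Rm = S - Tr := ⟨_, rfl⟩
  have hRsym : Rmᵀ = Rm := by rw [hRmdef, Matrix.transpose_sub, hSsym, hTsym]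
  have hRle : ∀ i j, |Rm i j| ≤ 1 / 2 := by
    intro i j
    simpa [hRmdef, hTrdef, hTdef, Matrix.map_apply] using abs_sub_round (S i j)
  obtain ⟨M'', hM''def⟩ : ∃ M'', M'' = B * Rm := ⟨_, rfl⟩
  have hM''le : ∀ i j, |M'' i j| ≤ (d : ℝ) / 2 := by
    intro i j
    rw [hM''def, Matrix.mul_apply]
    calc |∑ k, B i k * Rm k j| ≤ ∑ k, |B i k * Rm k j| := Finset.abs_sum_le_sum_abs _ _
      _ ≤ ∑ _k : Fin d, 1 * (1 / 2) := by
          refine Finset.sum_le_sum fun k _ => ?_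
          rw [abs_mul]
          exact mul_le_mul (hBle i k) (hRle k j) (abs_nonneg _) zero_le_one
      _ = (d : ℝ) / 2 := by simp; ring
  have hcond1 : B * M''ᵀ = M'' * Bᵀ := by
    rw [hM''def, Matrix.transpose_mul, hRsym, ← Matrix.mul_assoc]
  have hcond2 : Qr * (Tr * Prᵀ)ᵀ = (Tr * Prᵀ) * Qrᵀ := by
    rw [Matrix.transpose_mul, Matrix.transpose_transpose]
    calc Qr * (Pr * Trᵀ) = (Qr * Pr) * Trᵀ := by rw [Matrix.mul_assoc]
      _ = Tr := by rw [hQP, one_mul, hTsym]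
      _ = Tr * (Qr * Pr)ᵀ := by rw [hQP]; simp
      _ = (Tr * Prᵀ) * Qrᵀ := by rw [Matrix.transpose_mul, Matrix.mul_assoc]
  have hQint : Qr = ((Pmat N).adjugate).map (Int.cast : ℤ → ℝ) := by
    have key := (Int.castRingHom ℝ).map_adjugate (Pmat N)
    rw [RingHom.mapMatrix_apply, RingHom.mapMatrix_apply] at key
    simp only [Int.coe_castRingHom] at key
    rw [hQrdef, Matrix.inv_def, hPu.det, Ring.inverse_one, one_smul, hPrdef, key]
  refine ⟨Matrix.fromBlocks B M'' 0 (B⁻¹)ᵀ,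
    ⟨⟨B, M'', hBu.1, hBu.2, hcond1, rfl⟩, ?_⟩,
    Matrix.fromBlocks Qr (Tr * Prᵀ) 0 Prᵀ,
    ⟨Qr, Tr * Prᵀ, hQu.1, hQu.2, hcond2, by rw [hQinv]⟩, ?_, ?_⟩
  · -- entry bounds for n₁
    rintro (i | i) (j | j)
    · simpa [Matrix.fromBlocks] using le_trans (hBle i j) (by linarith)
    · simpa [Matrix.fromBlocks] using le_trans (hM''le i j) (by linarith)
    · simp only [Matrix.fromBlocks_apply₂₁, Matrix.zero_apply, abs_zero]
      linarith
    · simpa [Matrix.fromBlocks] using le_trans (hBinv_le j i) (by linarith)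
  · -- integrality of n₂
    rintro (i | i) (j | j)
    · simp only [Matrix.fromBlocks_apply₁₁, hQint, Matrix.map_apply]
      exact ⟨_, rfl⟩
    · simp only [Matrix.fromBlocks_apply₁₂, Matrix.mul_apply]
      refine Subring.sum_mem _ fun k _ => Subring.mul_mem _ ?_ ?_
      · rw [hTrdef]; exact ⟨T i k, rfl⟩
      · rw [hPrdef]; exact ⟨Pmat N j k, rfl⟩
    · simp only [Matrix.fromBlocks_apply₂₁, Matrix.zero_apply]
      exact ⟨0, by simp⟩
    · simp only [Matrix.fromBlocks_apply₂₂, Matrix.transpose_apply, hPrdef, Matrix.map_apply]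
      exact ⟨_, rfl⟩
  · -- the product identity
    rw [Matrix.fromBlocks_multiply]
    have hBS : B * S = M * Qrᵀ := by
      rw [hSdef, Matrix.mul_nonsing_inv_cancel_left _ _ hBdet]
    have htop : B * (Tr * Prᵀ) + M'' * Prᵀ = M := by
      have h1 : B * (Tr * Prᵀ) + M'' * Prᵀ = B * S * Prᵀ := by
        rw [hM''def, hRmdef]
        noncomm_ring
      rw [h1, hBS, Matrix.mul_assoc, ← Matrix.transpose_mul, hPQ]
      simp
    have hNinv : N⁻¹ = Pr * B⁻¹ := by
      rw [hNB, Matrix.mul_inv_rev B Qr, hQinv]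
    have hbr : (B⁻¹)ᵀ * Prᵀ = (N⁻¹)ᵀ := by
      rw [hNinv, Matrix.transpose_mul]
    rw [htop, hbr, hNB]
    simp [Matrix.mul_assoc]
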